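/- Let S : A → B be a linear map between C*-algebras. Then the 2-nd amplification S_2 : M_2(A) → M_2(B) is a Jordan homomorphism (i.e. S_2(x ∘ y) = S_2(x) ∘ S_2(y) for all x, y ∈ M_2(A), where x ∘ y = (xy + yx)/2) if and only if S is multiplicative, i.e. S(ab) = S(a)S(b) for all a, b ∈ A. -/

import Mathlib

/-- For a linear map `S : A → B` between C*-algebras, the second
amplification `S₂ : M₂(A) → M₂(B)` is a Jordan homomorphism (for the Jordan product
`x ∘ y = (xy + yx)/2`) if and only if `S` is multiplicative. -/
theorem amplification_two_jordanHom_iff_multiplicative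
    {A B : Type*} [NonUnitalCStarAlgebra A] [NonUnitalCStarAlgebra B]
    (S : A →ₗ[ℂ] B) :
    (∀ x y : Matrix (Fin 2) (Fin 2) A,
        ((2⁻¹ : ℂ) • (x * y + y * x)).map ⇑S =
          (2⁻¹ : ℂ) • (x.map ⇑S * y.map ⇑S + y.map ⇑S * x.map ⇑S)) ↔
    (∀ a b : A, S (a * b) = S a * S b) := by
  constructor
  · intro h a b
    have key := congrFun (congrFun (h (Matrix.single 0 1 a)
      (Matrix.single 1 0 b)) 0) 0
    simp [Matrix.mul_apply, Matrix.single, Matrix.map_apply,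
      Fin.sum_univ_two, Matrix.smul_apply, map_smul] at key
    have h2 : (2⁻¹ : ℂ) ≠ 0 := by norm_num
    exact key
  · intro h x y
    ext i j
    simp [Matrix.map_apply, Matrix.mul_apply, Matrix.smul_apply, map_add,
      map_sum, map_smul, h, Finset.mul_sum, Finset.sum_add_distrib]
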